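/- Let p and q be multiplicatively independent integers, each at least 2. Let σ be a substitution of constant length p on a finite alphabet A with fixed point y, let τ be a substitution of constant length q on a finite alphabet B with fixed point z, and let φ : A → C and ψ : B → C be letter-to-letter morphisms with φ(y) = ψ(z) = x. Then every word having infinitely many occurrences in x occurs in x with bounded gaps. -/

import Mathlib

/-- Extension of a morphism `σ : A → A*` to words by concatenation. -/
def substWord {A : Type*} (σ : A → List A) (w : List A) : List A := w.flatMap σ

/-- `σⁿ(u)` : the `n`-th iterate of the morphism `σ` applied to the word `u`. -/
def wordIter {A : Type*} (σ : A → List A) (n : ℕ) (u : List A) : List A :=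
  (substWord σ)^[n] u

/-- The prefix of length `n` of a one-sided sequence. -/
def seqPrefix {A : Type*} (x : ℕ → A) (n : ℕ) : List A := (List.range n).map x

/-- The word `w` is a prefix of the sequence `x`. -/
def IsPrefixSeq {A : Type*} (w : List A) (x : ℕ → A) : Prop := w = seqPrefix x w.length

/-- `x` is a fixed point of `σ`, i.e. `σ(x) = x`: the image under `σ` of every prefix
of `x` is again a prefix of `x`. -/
def IsFixedPoint {A : Type*} (σ : A → List A) (x : ℕ → A) : Prop :=
  ∀ n, IsPrefixSeq (substWord σ (seqPrefix x n)) x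

/-- `σ` is a substitution: some letter `a` is the first letter of `σ(a)`, and
`|σⁿ(b)| → ∞` for every letter `b`. -/
def IsSubstitution {A : Type*} (σ : A → List A) : Prop :=
  (∃ a, (σ a).head? = some a) ∧
  ∀ b, Filter.Tendsto (fun n => (wordIter σ n [b]).length) Filter.atTop Filter.atTop

/-- `σ` is of constant length `p`. -/
def ConstantLength {A : Type*} (σ : A → List A) (p : ℕ) : Prop := ∀ a, (σ a).length = p
/-- The factor `x_{[i, i+n)}` of a sequence. -/
def factorAt {A : Type*} (x : ℕ → A) (i n : ℕ) : List A := (List.range n).map fun k => x (i + k)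

/-- `i` is an occurrence of the word `u` in the sequence `x`. -/
def OccursAt {A : Type*} (x : ℕ → A) (u : List A) (i : ℕ) : Prop := factorAt x i u.length = u

/-- `u` is a factor of `x`. -/
def IsFactor {A : Type*} (x : ℕ → A) (u : List A) : Prop := ∃ i, OccursAt x u i

/-- `u` occurs in `x` with bounded gaps (its set of occurrences is syndetic). -/
def BoundedGaps {A : Type*} (x : ℕ → A) (u : List A) : Prop :=
  ∃ g, 0 < g ∧ ∀ i, ∃ j, i ≤ j ∧ j < i + g ∧ OccursAt x u j

/-- `x` is uniformly recurrent: every factor occurs with bounded gaps. -/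
def UniformlyRecurrent {A : Type*} (x : ℕ → A) : Prop :=
  ∀ u, IsFactor x u → BoundedGaps x u

/-- `w` is a return word to `u` in `x`: `w = x_{[j,k)}` for consecutive
occurrences `j < k` of `u` in `x`. -/
def IsReturnWord {A : Type*} (x : ℕ → A) (u w : List A) : Prop :=
  ∃ j k, j < k ∧ OccursAt x u j ∧ OccursAt x u k ∧
    (∀ m, j < m → m < k → ¬ OccursAt x u m) ∧ w = factorAt x j (k - j)

/-- `x` is linearly recurrent with constant `K`: it is uniformly recurrent and every
return word `w` to every nonempty factor `u` satisfies `|w| ≤ K|u|`. -/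
def LinearlyRecurrent {A : Type*} (x : ℕ → A) (K : ℕ) : Prop :=
  UniformlyRecurrent x ∧ ∀ u w, u ≠ [] → IsReturnWord x u w → w.length ≤ K * u.length

/-- `x` is ultimately periodic. -/
def UltimatelyPeriodic {A : Type*} (x : ℕ → A) : Prop :=
  ∃ N t, 0 < t ∧ ∀ n, N ≤ n → x (n + t) = x n
/-- Integers `p, q` are multiplicatively independent:
`p^k = q^l` (k, l ∈ ℕ) implies `k = l = 0`. -/
def MultiplicativelyIndependent (p q : ℕ) : Prop :=
  ∀ k l : ℕ, p ^ k = q ^ l → k = 0 ∧ l = 0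

namespace CobhamAux

variable {A B C : Type*}

theorem substWord_append (σ : A → List A) (a b : List A) :
    substWord σ (a ++ b) = substWord σ a ++ substWord σ b := List.flatMap_append ..

theorem wordIter_zero (σ : A → List A) (w : List A) : wordIter σ 0 w = w := rfl

theorem wordIter_add (σ : A → List A) (m n : ℕ) (w : List A) :
    wordIter σ (m + n) w = wordIter σ m (wordIter σ n w) :=
  Function.iterate_add_apply ..

theorem wordIter_succ (σ : A → List A) (n : ℕ) (w : List A) :
    wordIter σ (n + 1) w = wordIter σ n (substWord σ w) :=
  Function.iterate_succ_apply ..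

theorem wordIter_succ' (σ : A → List A) (n : ℕ) (w : List A) :
    wordIter σ (n + 1) w = substWord σ (wordIter σ n w) :=
  Function.iterate_succ_apply' ..

theorem wordIter_append (σ : A → List A) (m : ℕ) (a b : List A) :
    wordIter σ m (a ++ b) = wordIter σ m a ++ wordIter σ m b := by
  induction m generalizing a b with
  | zero => rfl
  | succ n ih => rw [wordIter_succ, wordIter_succ, wordIter_succ, substWord_append, ih]

theorem substWord_length {σ : A → List A} {p : ℕ} (hσ : ConstantLength σ p) (w : List A) :
    (substWord σ w).length = p * w.length := by
  induction w with
  | nil => simp [substWord]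
  | cons a l ih =>
      rw [show (a :: l) = [a] ++ l from rfl, substWord_append, List.length_append, ih]
      simp [substWord, hσ a, List.length_cons, Nat.mul_add, Nat.mul_one, Nat.add_comm]

theorem wordIter_length {σ : A → List A} {p : ℕ} (hσ : ConstantLength σ p) (m : ℕ) (w : List A) :
    (wordIter σ m w).length = p ^ m * w.length := by
  induction m with
  | zero => simp [wordIter_zero]
  | succ n ih => rw [wordIter_succ', substWord_length hσ, ih, pow_succ]; ring

theorem seqPrefix_length (x : ℕ → A) (n : ℕ) : (seqPrefix x n).length = n := by
  simp [seqPrefix]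

theorem factorAt_length (x : ℕ → A) (i n : ℕ) : (factorAt x i n).length = n := by
  simp [factorAt]

theorem factorAt_add (x : ℕ → A) (i a b : ℕ) :
    factorAt x i (a + b) = factorAt x i a ++ factorAt x (i + a) b := by
  unfold factorAt
  rw [List.range_add, List.map_append, List.map_map]
  congr 1
  apply List.map_congr_left
  intro k _
  simp [Nat.add_assoc]

theorem seqPrefix_add (x : ℕ → A) (n m : ℕ) :
    seqPrefix x (n + m) = seqPrefix x n ++ factorAt x n m := by
  unfold seqPrefix factorAt
  rw [List.range_add, List.map_append, List.map_map]
  rfl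

theorem factorAt_zero (x : ℕ → A) (i : ℕ) : factorAt x i 0 = [] := rfl

theorem factorAt_one (x : ℕ → A) (i : ℕ) : factorAt x i 1 = [x i] := by
  simp [factorAt, List.range_succ]

theorem factorAt_two (x : ℕ → A) (i : ℕ) : factorAt x i 2 = [x i, x (i+1)] := by
  have : (2:ℕ) = 1 + 1 := rfl
  rw [this, factorAt_add, factorAt_one, factorAt_one]; rfl

theorem seqPrefix_eq_factorAt (x : ℕ → A) (n : ℕ) : seqPrefix x n = factorAt x 0 n := by
  unfold seqPrefix factorAt
  simp

theorem factorAt_map (φ : A → C) (y : ℕ → A) (i n : ℕ) :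
    factorAt (fun k => φ (y k)) i n = (factorAt y i n).map φ := by
  simp [factorAt]

theorem factorAt_sub (x : ℕ → A) {i r m n : ℕ} (h : r + m ≤ n) :
    ((factorAt x i n).drop r).take m = factorAt x (i + r) m := by
  obtain ⟨c, rfl⟩ : ∃ c, n = r + m + c := ⟨n - (r+m), by omega⟩
  rw [show r + m + c = r + (m + c) from by ring, factorAt_add, factorAt_add]
  rw [List.drop_left' (factorAt_length ..), List.take_left' (factorAt_length ..)]

theorem occursAt_iff (x : ℕ → A) (u : List A) (i : ℕ) :
    OccursAt x u i ↔ factorAt x i u.length = u := Iff.rfl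

/-- Fixed point: substitution image of a prefix is the longer prefix. -/
theorem prefix_subst {σ : A → List A} {p : ℕ} (hσ : ConstantLength σ p) {y : ℕ → A}
    (hy : IsFixedPoint σ y) (n : ℕ) :
    substWord σ (seqPrefix y n) = seqPrefix y (p * n) := by
  have h := hy n
  rw [IsPrefixSeq] at h
  rw [h, substWord_length hσ, seqPrefix_length]

theorem prefix_iter {σ : A → List A} {p : ℕ} (hσ : ConstantLength σ p) {y : ℕ → A}
    (hy : IsFixedPoint σ y) (m n : ℕ) :
    wordIter σ m (seqPrefix y n) = seqPrefix y (p ^ m * n) := by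
  induction m with
  | zero => simp [wordIter_zero]
  | succ k ih =>
      rw [wordIter_succ', ih, prefix_subst hσ hy, pow_succ]
      ring_nf

theorem seqPrefix_succ (x : ℕ → A) (n : ℕ) :
    seqPrefix x (n + 1) = seqPrefix x n ++ [x n] := by
  rw [seqPrefix_add, factorAt_one]

/-- Single-letter block lemma for a fixed point. -/
theorem block1 {σ : A → List A} {p : ℕ} (hσ : ConstantLength σ p) {y : ℕ → A}
    (hy : IsFixedPoint σ y) (m j : ℕ) :
    factorAt y (p ^ m * j) (p ^ m) = wordIter σ m [y j] := by
  have h1 : seqPrefix y (p ^ m * (j+1)) = seqPrefix y (p^m*j) ++ wordIter σ m [y j] := by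
    rw [← prefix_iter hσ hy, seqPrefix_succ, wordIter_append, prefix_iter hσ hy]
  have h2 : seqPrefix y (p ^ m * (j+1)) = seqPrefix y (p^m*j) ++ factorAt y (p^m*j) (p^m) := by
    rw [show p^m*(j+1) = p^m*j + p^m from by ring, seqPrefix_add]
  rw [h1] at h2
  exact (List.append_cancel_left h2).symm

/-- Pair block lemma for a fixed point. -/
theorem block2 {σ : A → List A} {p : ℕ} (hσ : ConstantLength σ p) {y : ℕ → A}
    (hy : IsFixedPoint σ y) (m j : ℕ) :
    factorAt y (p ^ m * j) (p ^ m * 2) = wordIter σ m [y j, y (j+1)] := by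
  have : ([y j, y (j+1)] : List A) = [y j] ++ [y (j+1)] := rfl
  rw [this, wordIter_append, ← block1 hσ hy m j, ← block1 hσ hy m (j+1),
    show p^m*2 = p^m + p^m from by ring, factorAt_add,
    show p^m*j + p^m = p^m*(j+1) from by ring]

end CobhamAux

namespace CobhamAux

variable {A B C : Type*}

/-- Infinite pigeonhole over a finite type. -/
theorem pigeon {F : Type*} [Finite F] (S : Set ℕ) (hS : S.Infinite) (f : ℕ → F) :
    ∃ c, {i | i ∈ S ∧ f i = c}.Infinite := by
  by_contra h
  push_neg at h
  have : S.Finite := by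
    have : S ⊆ ⋃ c ∈ (Set.univ : Set F), {i | i ∈ S ∧ f i = c} := by
      intro i hi; simp only [Set.mem_iUnion]; exact ⟨f i, trivial, hi, rfl⟩
    exact Set.Finite.subset (Set.Finite.biUnion Set.finite_univ (fun c _ => h c)) this
  exact hS this

/-- Unbounded sets of naturals are infinite. -/
theorem infinite_of_unbounded {P : ℕ → Prop} (h : ∀ N, ∃ k, N ≤ k ∧ P k) :
    {k | P k}.Infinite := by
  apply Set.infinite_of_not_bddAbove
  rintro ⟨b, hb⟩
  obtain ⟨k, hk, hPk⟩ := h (b + 1)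
  exact absurd (hb hPk) (by omega)

theorem unbounded_of_infinite {S : Set ℕ} (h : S.Infinite) : ∀ N, ∃ k ∈ S, N ≤ k := by
  intro N
  obtain ⟨b, hb, hlt⟩ := h.exists_gt N
  exact ⟨b, hb, le_of_lt hlt⟩

/-- If an infinite set of naturals maps into a set `T` via division by `d`,
then `T` is infinite. -/
theorem infinite_div {S T : Set ℕ} (hS : S.Infinite) {d : ℕ} (hd : 0 < d)
    (h : ∀ i ∈ S, i / d ∈ T) : T.Infinite := by
  apply infinite_of_unbounded
  intro N
  obtain ⟨i, hi, hNi⟩ := unbounded_of_infinite hS (N * d)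
  refine ⟨i / d, ?_, h i hi⟩
  exact Nat.le_div_iff_mul_le hd |>.mpr hNi

/-- occurrence inside a "block" of `x`: if `factorAt x i n = W` and `u` sits in `W` at
offset `o` (given by a `pre/suf` decomposition), then `u` occurs at `i + pre.length`. -/
theorem occursAt_of_block {x : ℕ → C} {u W : List C} {i n : ℕ}
    (hW : factorAt x i n = W) (pre suf : List C) (hdec : W = pre ++ u ++ suf) :
    OccursAt x u (i + pre.length) := by
  have hlen : n = pre.length + u.length + (suf.length) := by
    rw [← factorAt_length x i n, hW, hdec]; simp [Nat.add_assoc]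
  rw [OccursAt, ← factorAt_sub x (i := i) (r := pre.length) (m := u.length) (n := n)
    (by omega), hW, hdec, List.append_assoc, List.drop_left, List.take_left]

/-- conversely: an occurrence of `u` inside the span of a block makes `u` an infix
of the block word. -/
theorem infix_of_occursAt {x : ℕ → C} {u W : List C} {i n j : ℕ}
    (hW : factorAt x i n = W) (hj : OccursAt x u j) (h1 : i ≤ j)
    (h2 : j + u.length ≤ i + n) : u <:+: W := by
  obtain ⟨r, rfl⟩ : ∃ r, j = i + r := ⟨j - i, by omega⟩
  have : ((factorAt x i n).drop r).take u.length = u := by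
    rw [factorAt_sub x (by omega)]; exact hj
  rw [hW] at this
  calc u = (W.drop r).take u.length := this.symm
    _ <:+: W.drop r := (List.take_prefix _ _).isInfix
    _ <:+: W := (List.drop_suffix _ _).isInfix

theorem substWord_infix (σ : A → List A) {l l' : List A} (h : l <:+: l') :
    substWord σ l <:+: substWord σ l' := by
  obtain ⟨s, t, rfl⟩ := h
  rw [substWord_append, substWord_append]
  exact ⟨substWord σ s, substWord σ t, rfl⟩

theorem wordIter_infix (σ : A → List A) (m : ℕ) {l l' : List A} (h : l <:+: l') :
    wordIter σ m l <:+: wordIter σ m l' := by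
  induction m with
  | zero => exact h
  | succ n ih => rw [wordIter_succ', wordIter_succ']; exact substWord_infix σ ih

theorem wordIter_prefix (σ : A → List A) (m : ℕ) {l l' : List A} (h : l <+: l') :
    wordIter σ m l <+: wordIter σ m l' := by
  obtain ⟨t, rfl⟩ := h
  rw [wordIter_append]
  exact ⟨wordIter σ m t, rfl⟩

end CobhamAux

namespace CobhamAux

variable {A C : Type*}

theorem infix_to_droptake {l W : List A} (h : l <:+: W) :
    ∃ r, r + l.length ≤ W.length ∧ (W.drop r).take l.length = l := by
  obtain ⟨pre, suf, rfl⟩ := h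
  refine ⟨pre.length, by simp [Nat.add_assoc], ?_⟩
  rw [List.append_assoc, List.drop_left, List.take_left]

theorem droptake_to_infix {l W : List A} {r : ℕ} (h : (W.drop r).take l.length = l) :
    l <:+: W :=
  h ▸ ((List.take_prefix _ _).isInfix.trans (List.drop_suffix _ _).isInfix)

/-- the pair of `y` at position `j` sits inside the level-`m` pair block at `j / p^m`. -/
theorem pair_in_block {σ : A → List A} {p : ℕ} (hp : 2 ≤ p) (hσlen : ConstantLength σ p)
    {y : ℕ → A} (hy : IsFixedPoint σ y) (m j : ℕ) :
    ∃ r, r + 2 ≤ p ^ m * 2 ∧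
      ((wordIter σ m [y (j / p^m), y (j / p^m + 1)]).drop r).take 2 = [y j, y (j+1)] := by
  have hpm : 0 < p ^ m := Nat.pow_pos (n := m) (by omega)
  have hdm : p ^ m * (j / p ^ m) + j % p ^ m = j := Nat.div_add_mod j (p ^ m)
  have hmod : j % p ^ m < p ^ m := Nat.mod_lt j hpm
  refine ⟨j % p ^ m, by omega, ?_⟩
  rw [← block2 hσlen hy m (j / p ^ m), factorAt_sub y (by omega), hdm, factorAt_two]

end CobhamAux

namespace CobhamAux

variable {A C : Type*}

theorem wordIter_one (σ : A → List A) (w : List A) : wordIter σ 1 w = substWord σ w := rfl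

/-- The main p-side extraction: a recurrent pair `(w₁,w₂)` in `y`, which reoccurs inside
its own substitution image (at offset `r1` at level `m1`), and whose level-`s` image
contains `u` at offset `o`. -/
theorem pside [Finite A] {σ : A → List A} {p : ℕ} (hp : 2 ≤ p)
    (hσlen : ConstantLength σ p) {y : ℕ → A} (hy : IsFixedPoint σ y)
    {φ : A → C} {x : ℕ → C} (hφ : ∀ k, x k = φ (y k)) {u : List C}
    (hinf : {i | OccursAt x u i}.Infinite) :
    ∃ (w₁ w₂ : A) (s m1 r1 o : ℕ), 1 ≤ m1 ∧ r1 + 2 ≤ p ^ m1 * 2 ∧ o + u.length ≤ p ^ s * 2 ∧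
      (∃ j0, 1 ≤ j0 ∧ y j0 = w₁ ∧ y (j0+1) = w₂) ∧
      (∀ j, y j = w₁ → y (j+1) = w₂ →
        y (p ^ m1 * j + r1) = w₁ ∧ y (p ^ m1 * j + r1 + 1) = w₂) ∧
      (∀ j, y j = w₁ → y (j+1) = w₂ → OccursAt x u (p ^ s * j + o)) := by
  classical
  have hxeq : x = fun k => φ (y k) := funext hφ
  have hxblock : ∀ m j, factorAt x (p^m * j) (p^m * 2) = (wordIter σ m [y j, y (j+1)]).map φ := by
    intro m j
    rw [hxeq, factorAt_map, block2 hσlen hy m j]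
  set RecPair : A × A → Prop := fun v => {j | y j = v.1 ∧ y (j+1) = v.2}.Infinite with hRecPair
  -- the chain step
  have step : ∀ v : A × A, RecPair v →
      ∃ v', RecPair v' ∧ [v.1, v.2] <:+: substWord σ [v'.1, v'.2] := by
    intro v hv
    obtain ⟨v', hv'⟩ := pigeon _ hv (fun j => (y (j / p), y (j / p + 1)))
    refine ⟨v', ?_, ?_⟩
    · refine infinite_div hv' (d := p) (by omega) ?_
      rintro i ⟨-, hfi⟩
      have h1 : y (i / p) = v'.1 := by rw [← hfi]
      have h2 : y (i / p + 1) = v'.2 := by rw [← hfi]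
      exact ⟨h1, h2⟩
    · obtain ⟨j, ⟨hjS, hjf⟩⟩ := hv'.nonempty
      obtain ⟨r, hr2, hdt⟩ := pair_in_block hp hσlen hy 1 j
      rw [pow_one] at hdt
      have h1 : y (j / p) = v'.1 := by rw [← hjf]
      have h2 : y (j / p + 1) = v'.2 := by rw [← hjf]
      rw [h1, h2, hjS.1, hjS.2] at hdt
      rw [wordIter_one] at hdt
      exact droptake_to_infix (l := [v.1, v.2]) hdt
  -- initialization: `u` sits inside the level `s0` image of a recurrent pair
  set s0 := u.length with hs0
  have hlpow : u.length ≤ p ^ s0 := by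
    calc u.length ≤ 2 ^ s0 := (Nat.lt_two_pow_self (n := s0)).le
    _ ≤ p ^ s0 := Nat.pow_le_pow_left hp s0
  have init : ∃ v0 : A × A, RecPair v0 ∧ u <:+: (wordIter σ s0 [v0.1, v0.2]).map φ := by
    obtain ⟨v0, hv0⟩ := pigeon _ hinf (fun i => (y (i / p ^ s0), y (i / p ^ s0 + 1)))
    have hd : 0 < p ^ s0 := Nat.pow_pos (n := s0) (by omega)
    refine ⟨v0, ?_, ?_⟩
    · refine infinite_div hv0 hd ?_
      rintro i ⟨-, hfi⟩
      have h1 : y (i / p ^ s0) = v0.1 := by rw [← hfi]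
      have h2 : y (i / p ^ s0 + 1) = v0.2 := by rw [← hfi]
      exact ⟨h1, h2⟩
    · obtain ⟨i, ⟨hiO, hif⟩⟩ := hv0.nonempty
      have h1 : y (i / p ^ s0) = v0.1 := by rw [← hif]
      have h2 : y (i / p ^ s0 + 1) = v0.2 := by rw [← hif]
      have hW := hxblock s0 (i / p ^ s0)
      rw [h1, h2] at hW
      refine infix_of_occursAt hW hiO ?_ ?_
      · rw [mul_comm]
        exact Nat.div_mul_le_self i (p ^ s0)
      · have h3 := Nat.div_add_mod i (p ^ s0)
        have h4 : i % p ^ s0 < p ^ s0 := Nat.mod_lt i hd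
        omega
  obtain ⟨v0, hv0rec, hv0inf⟩ := init
  -- build the chain by iterating the step function
  set F : A × A → A × A := fun v => if h : RecPair v then (step v h).choose else v with hF
  set chain : ℕ → A × A := fun n => F^[n] v0 with hchain
  have chain_succ : ∀ n, chain (n + 1) = F (chain n) := by
    intro n
    simp only [hchain, Function.iterate_succ_apply']
  have chain_rec : ∀ n, RecPair (chain n) := by
    intro n
    induction n with
    | zero => exact hv0rec
    | succ k ih =>
        rw [chain_succ, hF]
        simp only [ih, dif_pos]
        exact (step (chain k) ih).choose_spec.1
  have chain_step : ∀ n, [(chain n).1, (chain n).2] <:+: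
      substWord σ [(chain (n+1)).1, (chain (n+1)).2] := by
    intro n
    have h := (step (chain n) (chain_rec n)).choose_spec.2
    have : chain (n+1) = (step (chain n) (chain_rec n)).choose := by
      rw [chain_succ, hF]
      simp only [chain_rec n, dif_pos]
    rw [this]
    exact h
  have comp : ∀ d n, [(chain n).1, (chain n).2] <:+:
      wordIter σ d [(chain (n+d)).1, (chain (n+d)).2] := by
    intro d
    induction d with
    | zero => intro n; exact List.infix_refl _
    | succ k ih =>
        intro n
        refine (ih n).trans ?_
        have h := substWord_infix σ (chain_step (n + k)) -- not needed directly
        have h2 := wordIter_infix σ k (chain_step (n + k))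
        rw [← wordIter_succ] at h2
        exact h2
  -- pigeonhole for a repeated pair
  obtain ⟨i1, i2, hne, hfe⟩ := Finite.exists_ne_map_eq_of_infinite (fun n => chain n)
  wlog hlt : i1 < i2 generalizing i1 i2
  · exact this i2 i1 (Ne.symm hne) hfe.symm (by omega)
  set w := chain i1 with hw
  set m1 := i2 - i1 with hm1
  have hi12 : i1 + m1 = i2 := by omega
  have hchaineq : chain (i1 + m1) = w := by rw [hi12, ← hfe]
  have pairinf : [w.1, w.2] <:+: wordIter σ m1 [w.1, w.2] := by
    have := comp m1 i1
    rw [hchaineq] at this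
    exact this
  have uinf : u <:+: (wordIter σ (s0 + i1) [w.1, w.2]).map φ := by
    have h0 := comp i1 0
    rw [Nat.zero_add] at h0
    have h1 : u <:+: (wordIter σ s0 [(chain 0).1, (chain 0).2]).map φ := hv0inf
    have h2 := (wordIter_infix σ s0 h0).map φ
    rw [← wordIter_add] at h2
    exact h1.trans h2
  set s := s0 + i1 with hs
  -- extract offsets
  obtain ⟨r1, hr1len, hr1dt⟩ := infix_to_droptake pairinf
  rw [wordIter_length hσlen] at hr1len
  simp only [List.length_cons, List.length_nil] at hr1len
  obtain ⟨pre, suf, hdec⟩ := uinf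
  have hPBlen : ((wordIter σ s [w.1, w.2]).map φ).length = p ^ s * 2 := by
    rw [List.length_map, wordIter_length hσlen]
    rfl
  have holen : pre.length + u.length ≤ p ^ s * 2 := by
    rw [← hdec] at hPBlen
    simp only [List.length_append] at hPBlen
    omega
  refine ⟨w.1, w.2, s, m1, r1, pre.length, by omega, by
      convert hr1len using 2
      , holen, ?_, ?_, ?_⟩
  · obtain ⟨j0, hj0mem, hj0ge⟩ := (unbounded_of_infinite (chain_rec i1) 1)
    exact ⟨j0, hj0ge, hj0mem.1, hj0mem.2⟩
  · intro j h1 h2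
    have hb := block2 hσlen hy m1 j
    rw [h1, h2] at hb
    have h3 : ((factorAt y (p ^ m1 * j) (p ^ m1 * 2)).drop r1).take 2 = [w.1, w.2] := by
      rw [hb]
      convert hr1dt using 2
      rfl
    rw [factorAt_sub y (by
      convert hr1len using 2
      )] at h3
    rw [factorAt_two] at h3
    have e1 : y (p ^ m1 * j + r1) = w.1 := by
      have := congrArg (fun l => l.head?) h3
      simpa using this
    have e2 : y (p ^ m1 * j + r1 + 1) = w.2 := by
      have := congrArg (fun l => l.tail.head?) h3
      simpa using this
    exact ⟨e1, e2⟩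
  · intro j h1 h2
    have hW := hxblock s j
    rw [h1, h2] at hW
    exact occursAt_of_block hW pre suf hdec.symm

end CobhamAux

namespace CobhamAux

variable {B C : Type*}

theorem head?_substWord {τ : B → List B} {q : ℕ} (hq : 2 ≤ q) (hτlen : ConstantLength τ q)
    {w : List B} {d : B} (hw : w.head? = some d) :
    (substWord τ w).head? = (τ d).head? := by
  cases w with
  | nil => simp at hw
  | cons a w' =>
      simp only [List.head?_cons, Option.some.injEq] at hw
      have hne : τ a ≠ [] := by
        intro h
        have := hτlen a
        rw [h] at this
        simp at this
        omega
      obtain ⟨b, l, hbl⟩ := List.exists_cons_of_ne_nil hne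
      rw [← hw]
      show (substWord τ (a :: w')).head? = _
      rw [substWord, List.flatMap_cons, hbl]
      simp

theorem factorAt_head? (z : ℕ → B) (i n : ℕ) (hn : 0 < n) :
    (factorAt z i n).head? = some (z i) := by
  obtain ⟨m, rfl⟩ : ∃ m, n = 1 + m := ⟨n - 1, by omega⟩
  rw [factorAt_add, factorAt_one]
  simp

/-- The main q-side extraction: a letter `c` occurring in `z` at a position `κ0 ≥ 1`,
whose level-`(ρ + k·m2)` images are all `u`-free. -/
theorem qside [Finite B] {τ : B → List B} {q : ℕ} (hq : 2 ≤ q)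
    (hτlen : ConstantLength τ q) {z : ℕ → B} (hz : IsFixedPoint τ z)
    {ψ : B → C} {x : ℕ → C} (hψ : ∀ k, x k = ψ (z k)) {u : List C} (hu : u ≠ [])
    (hbg : ¬ BoundedGaps x u) :
    ∃ (c : B) (κ0 ρ m2 : ℕ), 1 ≤ m2 ∧ 1 ≤ κ0 ∧ z κ0 = c ∧
      ∀ k, ¬ u <:+: (wordIter τ (ρ + k * m2) [c]).map ψ := by
  classical
  have hul : 0 < u.length := List.length_pos_iff.mpr hu
  rw [BoundedGaps] at hbg
  push_neg at hbg
  have hxeq : x = fun k => ψ (z k) := funext hψ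
  have hxblock : ∀ t k, factorAt x (q^t * k) (q^t) = (wordIter τ t [z k]).map ψ := by
    intro t k
    have h := block1 hτlen hz t k
    rw [hxeq, factorAt_map, h]
  have hqt : ∀ t : ℕ, 0 < q ^ t := fun t => Nat.pow_pos (n := t) (by omega)
  -- step 1 : arbitrarily far u-free blocks at every level
  have M1 : ∀ t K : ℕ, ∃ k, K ≤ k ∧ ¬ u <:+: (wordIter τ t [z k]).map ψ := by
    intro t K
    obtain ⟨i, hi⟩ := hbg ((K + 3) * q ^ t) (by positivity)
    set k := max (K + 1) (i / q ^ t + 1) with hk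
    have hdm := Nat.div_add_mod i (q ^ t)
    have h1 : i ≤ q ^ t * k := by
      have : i / q ^ t + 1 ≤ k := le_max_right _ _
      have h2 : q ^ t * (i / q ^ t + 1) ≤ q ^ t * k := Nat.mul_le_mul_left _ this
      have h3 : i % q ^ t < q ^ t := Nat.mod_lt i (hqt t)
      nlinarith [hqt t]
    have h2 : q ^ t * (k + 1) ≤ i + (K + 3) * q ^ t := by
      have hk2 : k ≤ i / q ^ t + K + 1 := by
        apply max_le
        · exact Nat.succ_le_succ (Nat.le_add_left K _)
        · exact Nat.succ_le_succ (Nat.le_add_right _ K)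
      have : q ^ t * (k + 1) ≤ q ^ t * (i / q ^ t + K + 2) :=
        Nat.mul_le_mul_left _ (Nat.succ_le_succ hk2)
      have h4 : q ^ t * (i / q ^ t) ≤ i := by
        rw [mul_comm]; exact Nat.div_mul_le_self i _
      nlinarith
    have h5 : q ^ t * (k + 1) = q ^ t * k + q ^ t := by ring
    refine ⟨k, le_trans (by omega) (le_max_left (K+1) _), ?_⟩
    intro hcon
    obtain ⟨r, hrlen, hrdt⟩ := infix_to_droptake hcon
    rw [List.length_map, wordIter_length hτlen] at hrlen
    simp only [List.length_cons, List.length_nil, Nat.mul_one] at hrlen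
    have hocc : OccursAt x u (q ^ t * k + r) := by
      rw [OccursAt, ← factorAt_sub x (i := q ^ t * k) (r := r) (m := u.length) (n := q ^ t)
        (by omega), hxblock t k]
      exact hrdt
    exact hi (q ^ t * k + r) (by omega) (by omega) hocc
  -- step 2 : pigeonhole a letter c0 with u-free blocks at infinitely many levels
  set kch : ℕ → ℕ := fun t => (M1 t t).choose with hkch
  have hkch1 : ∀ t, t ≤ kch t := fun t => (M1 t t).choose_spec.1
  have hkch2 : ∀ t, ¬ u <:+: (wordIter τ t [z (kch t)]).map ψ := fun t => (M1 t t).choose_spec.2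
  obtain ⟨c0, hc0⟩ := pigeon Set.univ Set.infinite_univ (fun t => z (kch t))
  set T : Set ℕ := {i | i ∈ Set.univ ∧ z (kch i) = c0} with hT
  have hTfree : ∀ t ∈ T, ¬ u <:+: (wordIter τ t [c0]).map ψ := by
    intro t ht
    have := hkch2 t
    rwa [ht.2] at this
  have hc0rec : {k | z k = c0}.Infinite := by
    apply infinite_of_unbounded
    intro N
    obtain ⟨t, ht, hNt⟩ := unbounded_of_infinite hc0 N
    exact ⟨kch t, le_trans hNt (hkch1 t), ht.2⟩
  -- step 3 : the first-letter chain of c0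
  have hne : ∀ t, wordIter τ t [c0] ≠ [] := by
    intro t h
    have hlen := wordIter_length hτlen t [c0]
    rw [h] at hlen
    simp only [List.length_nil, List.length_cons, Nat.mul_one] at hlen
    have := hqt t
    omega
  have hex : ∀ t, ∃ d, (wordIter τ t [c0]).head? = some d := by
    intro t
    cases h : wordIter τ t [c0] with
    | nil => exact absurd h (hne t)
    | cons a l => exact ⟨a, by simp⟩
  choose chead hchead using hex
  have hstep : ∀ t, (τ (chead t)).head? = some (chead (t+1)) := by
    intro t
    have h1 := hchead (t+1)
    rw [wordIter_succ' τ t [c0], head?_substWord hq hτlen (hchead t)] at h1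
    exact h1
  have hshift : ∀ m t, (wordIter τ m [chead t]).head? = some (chead (t + m)) := by
    intro m
    induction m with
    | zero => intro t; simp [wordIter_zero]
    | succ d ih =>
        intro t
        rw [wordIter_succ' τ d [chead t], head?_substWord hq hτlen (ih t), hstep (t + d),
          Nat.add_assoc]
  -- pigeonhole the chain
  obtain ⟨j1, j2, hne12, hfeq⟩ := Finite.exists_ne_map_eq_of_infinite (fun t => chead t)
  wlog hlt : j1 < j2 generalizing j1 j2
  · exact this j2 j1 (Ne.symm hne12) hfeq.symm (by omega)
  set c := chead j1 with hc
  set m2 := j2 - j1 with hm2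
  have hm2pos : 1 ≤ m2 := by omega
  have hcfix : (wordIter τ m2 [c]).head? = some c := by
    rw [hshift m2 j1, show j1 + m2 = j2 from by omega, ← hfeq]
  -- c occurs in z at arbitrarily large positions
  have hzc : ∀ k, z k = c0 → z (q ^ j1 * k) = c := by
    intro k hk
    have hb := block1 hτlen hz j1 k
    have hh := factorAt_head? z (q ^ j1 * k) (q ^ j1) (hqt j1)
    rw [hb, hk] at hh
    have := hchead j1
    rw [this] at hh
    exact (Option.some_inj.mp hh).symm
  have hcrec : {k | z k = c}.Infinite := by
    apply infinite_of_unbounded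
    intro N
    obtain ⟨k, hk, hNk⟩ := unbounded_of_infinite hc0rec N
    refine ⟨q ^ j1 * k, ?_, hzc k hk⟩
    calc N ≤ k := hNk
    _ = 1 * k := (one_mul k).symm
    _ ≤ q ^ j1 * k := Nat.mul_le_mul_right k (hqt j1)
  obtain ⟨κ0, hκmem, hκge⟩ := unbounded_of_infinite hcrec 1
  -- u-free levels for c
  have hcpref : [c] <+: wordIter τ j1 [c0] := by
    have h := hchead j1
    cases hw : wordIter τ j1 [c0] with
    | nil => exact absurd hw (hne j1)
    | cons a l =>
        rw [hw] at h
        simp only [List.head?_cons, Option.some.injEq] at h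
        have hca : c = a := by rw [hc, h]
        rw [hca]
        exact ⟨l, rfl⟩
  have hT2 : ∀ N, ∃ t', N ≤ t' ∧ ¬ u <:+: (wordIter τ t' [c]).map ψ := by
    intro N
    obtain ⟨t, ht, hNt⟩ := unbounded_of_infinite hc0 (N + j1)
    refine ⟨t - j1, by omega, ?_⟩
    intro hcon
    apply hTfree t ht
    refine hcon.trans ?_
    have h1 : wordIter τ (t - j1) [c] <+: wordIter τ (t - j1) (wordIter τ j1 [c0]) :=
      wordIter_prefix τ _ hcpref
    rw [← wordIter_add, show t - j1 + j1 = t from by omega] at h1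
    exact (h1.map ψ).isInfix
  set T2 : Set ℕ := {t' | ¬ u <:+: (wordIter τ t' [c]).map ψ} with hT2def
  have hT2inf : T2.Infinite := infinite_of_unbounded (by
    intro N; obtain ⟨t', h1, h2⟩ := hT2 N; exact ⟨t', h1, h2⟩)
  -- residues
  obtain ⟨ρf, hρf⟩ := pigeon T2 hT2inf (fun t => (⟨t % m2, Nat.mod_lt t hm2pos⟩ : Fin m2))
  set ρ := (ρf : ℕ) with hρ
  -- prefix-monotonicity along the arithmetic progression
  have honestep : ∀ n, wordIter τ n [c] <+: wordIter τ (n + m2) [c] := by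
    intro n
    rw [wordIter_add]
    obtain ⟨rest, hrest⟩ : ∃ rest, wordIter τ m2 [c] = [c] ++ rest := by
      cases hw : wordIter τ m2 [c] with
      | nil =>
          rw [hw] at hcfix
          simp at hcfix
      | cons a l =>
          rw [hw] at hcfix
          simp only [List.head?_cons, Option.some.injEq] at hcfix
          exact ⟨l, by simp [hcfix]⟩
    rw [hrest, wordIter_append]
    exact ⟨wordIter τ n rest, rfl⟩
  have hmulstep : ∀ n d, wordIter τ n [c] <+: wordIter τ (n + d * m2) [c] := by
    intro n d
    induction d with
    | zero => simp [List.prefix_refl]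
    | succ e ih =>
        refine ih.trans ?_
        rw [show n + (e+1) * m2 = (n + e * m2) + m2 from by ring]
        exact honestep _
  refine ⟨c, κ0, ρ, m2, hm2pos, hκge, hκmem, ?_⟩
  intro k hcon
  obtain ⟨t, ⟨htT2, htρ⟩, htge⟩ := unbounded_of_infinite hρf (ρ + k * m2)
  apply htT2
  refine hcon.trans ?_
  have htmod : t % m2 = ρ := by
    have := congrArg (Fin.val) htρ
    simpa using this
  have hdm := Nat.div_add_mod t m2
  have hklem : k * m2 ≤ m2 * (t / m2) := by omega
  have hkle : k ≤ t / m2 := by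
    refine Nat.le_of_mul_le_mul_left ?_ (by omega : 0 < m2)
    calc m2 * k = k * m2 := mul_comm ..
    _ ≤ m2 * (t / m2) := hklem
  have hteq : t = (ρ + k * m2) + (t / m2 - k) * m2 := by
    have h1 : (t / m2 - k) * m2 = t / m2 * m2 - k * m2 := Nat.sub_mul ..
    have h2 : t / m2 * m2 = m2 * (t / m2) := mul_comm ..
    omega
  rw [hteq]
  exact ((hmulstep (ρ + k * m2) (t / m2 - k)).map ψ).isInfix

end CobhamAux

namespace CobhamAux

/-- climbing ladder: if `h = mα − nβ` is a small positive combination, the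
lattice points `kα − k'β` with large natural coefficients hit any interval
of length `> h`. -/
theorem ladder_up {α β c d : ℝ} (hα : 0 < α) (hβ : 0 < β) (hcd : c < d)
    (m n : ℕ) {h : ℝ} (hh : h = (m:ℝ) * α - (n:ℝ) * β)
    (hh0 : 0 < h) (hhd : h < d - c) (K : ℕ) :
    ∃ k k' : ℕ, K ≤ k ∧ K ≤ k' ∧ c < (k:ℝ) * α - (k':ℝ) * β ∧ (k:ℝ) * α - (k':ℝ) * β < d := by
  -- choose a large starting coefficient N
  obtain ⟨N0, hN0⟩ := exists_nat_gt ((c + ((K:ℝ) + 1) * β) / α)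
  set N := N0 + K with hN
  have hNα : c + ((K:ℝ) + 1) * β < (N:ℝ) * α := by
    have h1 : c + ((K:ℝ) + 1) * β < (N0:ℝ) * α := by
      have := (div_lt_iff₀ hα).mp hN0
      linarith
    have h2 : (N0:ℝ) * α ≤ (N:ℝ) * α := by
      have : (N0:ℝ) ≤ N := by exact_mod_cast Nat.le_add_right N0 K
      nlinarith
    linarith
  set b0 := ⌈((N:ℝ) * α - c) / β⌉₊ with hb0
  have hb0K : K ≤ b0 := by
    have h1 : ((K:ℝ) + 1) < ((N:ℝ) * α - c) / β := by
      rw [lt_div_iff₀ hβ]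
      linarith
    have h2 : ((N:ℝ) * α - c) / β ≤ (b0 : ℝ) := Nat.le_ceil _
    have : (K : ℝ) < (b0 : ℝ) := by linarith
    exact_mod_cast this.le
  have hX0 : (N:ℝ) * α - (b0:ℝ) * β ≤ c := by
    have h2 : ((N:ℝ) * α - c) / β ≤ (b0 : ℝ) := Nat.le_ceil _
    rw [div_le_iff₀ hβ] at h2
    linarith
  set X0 := (N:ℝ) * α - (b0:ℝ) * β with hX0def
  have hexj : ∃ j : ℕ, c < X0 + (j:ℝ) * h := by
    obtain ⟨j, hj⟩ := exists_nat_gt ((c - X0) / h)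
    refine ⟨j, ?_⟩
    have := (div_lt_iff₀ hh0).mp hj
    linarith
  set j := Nat.find hexj with hjdef
  have hjspec : c < X0 + (j:ℝ) * h := Nat.find_spec hexj
  have hjpos : j ≠ 0 := by
    intro h0
    rw [h0] at hjspec
    simp at hjspec
    linarith
  obtain ⟨jp, hjp⟩ : ∃ jp, j = jp + 1 := ⟨j - 1, by omega⟩
  have hprev : ¬ c < X0 + (jp:ℝ) * h := Nat.find_min hexj (by omega)
  push_neg at hprev
  have hupper : X0 + (j:ℝ) * h < d := by
    have : X0 + (j:ℝ) * h = (X0 + (jp:ℝ) * h) + h := by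
      rw [hjp]
      push_cast
      ring
    rw [this]
    linarith
  refine ⟨N + j * m, b0 + j * n, by omega, by omega, ?_, ?_⟩
  · have heq : ((N + j * m : ℕ):ℝ) * α - ((b0 + j * n : ℕ):ℝ) * β = X0 + (j:ℝ) * h := by
      rw [hX0def, hh]
      push_cast
      ring
    rw [heq]
    exact hjspec
  · have heq : ((N + j * m : ℕ):ℝ) * α - ((b0 + j * n : ℕ):ℝ) * β = X0 + (j:ℝ) * h := by
      rw [hX0def, hh]
      push_cast
      ring
    rw [heq]
    exact hupper

set_option maxHeartbeats 1000000 in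
/-- Kronecker-type density: for multiplicatively independent `P, Q ≥ 2`, the ratios
`P^k / Q^k'` enter any interval `(a,b) ⊆ ℝ⁺`, with `k, k'` arbitrarily large. -/
theorem kronecker {P Q : ℕ} (hP : 2 ≤ P) (hQ : 2 ≤ Q)
    (hmi : ∀ k l : ℕ, P ^ k = Q ^ l → k = 0 ∧ l = 0)
    {a b : ℝ} (ha : 0 < a) (hab : a < b) (K : ℕ) :
    ∃ k k' : ℕ, K ≤ k' ∧ a * (Q:ℝ) ^ k' < (P:ℝ) ^ k ∧ (P:ℝ) ^ k < b * (Q:ℝ) ^ k' := by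
  set α := Real.log P with hαdef
  set β := Real.log Q with hβdef
  have hα : 0 < α := Real.log_pos (by exact_mod_cast hP)
  have hβ : 0 < β := Real.log_pos (by exact_mod_cast hQ)
  have hPr : (1:ℝ) < (P:ℝ) := by exact_mod_cast hP
  have hQr : (1:ℝ) < (Q:ℝ) := by exact_mod_cast hQ
  set c := Real.log a with hcdef
  set d := Real.log b with hddef
  have hcd : c < d := Real.log_lt_log ha hab
  -- main claim in additive form
  have hPpos : (0:ℝ) < (P:ℝ) := by exact_mod_cast (by omega : 0 < P)
  have hQpos : (0:ℝ) < (Q:ℝ) := by exact_mod_cast (by omega : 0 < Q)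
  suffices hmain : ∃ k k' : ℕ, K ≤ k' ∧ c < (k:ℝ) * α - (k':ℝ) * β ∧
      (k:ℝ) * α - (k':ℝ) * β < d by
    obtain ⟨k, k', hK, h1, h2⟩ := hmain
    have hQk : (0:ℝ) < (Q:ℝ) ^ k' := pow_pos hQpos k'
    have hPk : (0:ℝ) < (P:ℝ) ^ k := pow_pos hPpos k
    refine ⟨k, k', hK, ?_, ?_⟩
    · have hlog : Real.log (a * (Q:ℝ) ^ k') < Real.log ((P:ℝ) ^ k) := by
        rw [Real.log_mul (ne_of_gt ha) (ne_of_gt hQk), Real.log_pow, Real.log_pow]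
        rw [← hαdef, ← hβdef, ← hcdef]
        linarith
      exact (Real.log_lt_log_iff (by positivity) hPk).mp hlog
    · have hlog : Real.log ((P:ℝ) ^ k) < Real.log (b * (Q:ℝ) ^ k') := by
        rw [Real.log_mul (ne_of_gt (lt_trans ha hab)) (ne_of_gt hQk), Real.log_pow,
          Real.log_pow, ← hαdef, ← hβdef, ← hddef]
        linarith
      exact (Real.log_lt_log_iff hPk (mul_pos (lt_trans ha hab) hQk)).mp hlog
  -- the subgroup generated by α and β is dense
  set S : AddSubgroup ℝ := AddSubgroup.zmultiples α ⊔ AddSubgroup.zmultiples β with hSdef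
  have hdense : Dense (S : Set ℝ) := by
    rcases S.dense_or_cyclic with hd | ⟨g, hg⟩
    · exact hd
    · exfalso
      have hαS : α ∈ S := (le_sup_left : AddSubgroup.zmultiples α ≤ S)
        (AddSubgroup.mem_zmultiples α)
      have hβS : β ∈ S := (le_sup_right : AddSubgroup.zmultiples β ≤ S)
        (AddSubgroup.mem_zmultiples β)
      rw [hg] at hαS hβS
      obtain ⟨mi, hmval⟩ := AddSubgroup.mem_closure_singleton.mp hαS
      obtain ⟨ni, hnval⟩ := AddSubgroup.mem_closure_singleton.mp hβS
      rw [zsmul_eq_mul] at hmval hnval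
      -- (ni)·α = (mi)·β
      have hkey : (ni:ℝ) * α = (mi:ℝ) * β := by
        rw [← hmval, ← hnval]; ring
      -- find natural M, N ≥ 1 with N α = M β
      have hmain2 : ∃ M N1 : ℕ, 1 ≤ M ∧ 1 ≤ N1 ∧ (N1:ℝ) * α = (M:ℝ) * β := by
        rcases lt_trichotomy ni 0 with hn | hn | hn
        · have hmneg : mi < 0 := by
            by_contra hmp
            push_neg at hmp
            have h1 : (ni:ℝ) * α < 0 := by
              have : (ni:ℝ) < 0 := by exact_mod_cast hn
              nlinarith
            have h2 : 0 ≤ (mi:ℝ) * β := by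
              have : (0:ℝ) ≤ (mi:ℝ) := by exact_mod_cast hmp
              nlinarith
            linarith
          refine ⟨(-mi).toNat, (-ni).toNat, by omega, by omega, ?_⟩
          have h1 : (((-ni).toNat : ℤ) : ℝ) = -(ni:ℝ) := by
            have : ((-ni).toNat : ℤ) = -ni := Int.toNat_of_nonneg (by omega)
            rw [this]; push_cast; ring
          have h2 : (((-mi).toNat : ℤ) : ℝ) = -(mi:ℝ) := by
            have : ((-mi).toNat : ℤ) = -mi := Int.toNat_of_nonneg (by omega)
            rw [this]; push_cast; ring
          push_cast at h1 h2 ⊢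
          rw [h1, h2]
          linarith [hkey]
        · exfalso
          rw [hn] at hkey
          simp at hkey
          -- 0 = mi * β ; also α = mi • g, β = ni • g with ni = 0 → β = 0 contradiction
          rw [hn] at hnval
          simp at hnval
          linarith [hβ, hnval]
        · have hmpos : 0 < mi := by
            by_contra hmp
            push_neg at hmp
            have h1 : 0 < (ni:ℝ) * α := by
              have : (0:ℝ) < (ni:ℝ) := by exact_mod_cast hn
              nlinarith
            have h2 : (mi:ℝ) * β ≤ 0 := by
              have : (mi:ℝ) ≤ 0 := by exact_mod_cast hmp
              nlinarith
            linarith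
          refine ⟨mi.toNat, ni.toNat, by omega, by omega, ?_⟩
          have h1 : ((ni.toNat : ℤ) : ℝ) = (ni:ℝ) := by
            rw [Int.toNat_of_nonneg (by omega)]
          have h2 : ((mi.toNat : ℤ) : ℝ) = (mi:ℝ) := by
            rw [Int.toNat_of_nonneg (by omega)]
          push_cast at h1 h2 ⊢
          rw [h1, h2]
          exact hkey
      obtain ⟨M, N1, hM1, hN1, hNM⟩ := hmain2
      -- exponentiate : P ^ N1 = Q ^ M
      have hlogeq : Real.log ((P:ℝ) ^ N1) = Real.log ((Q:ℝ) ^ M) := by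
        rw [Real.log_pow, Real.log_pow, ← hαdef, ← hβdef, hNM]
      have hexp : ((P:ℝ)) ^ N1 = (Q:ℝ) ^ M := by
        have h1 := congrArg Real.exp hlogeq
        rwa [Real.exp_log (by positivity), Real.exp_log (by positivity)] at h1
      have hnat : P ^ N1 = Q ^ M := by exact_mod_cast hexp
      obtain ⟨h1, h2⟩ := hmi N1 M hnat
      omega
  -- a small positive element of S
  set ε := min (d - c) (min α β) with hε
  have hε0 : 0 < ε := by
    apply lt_min (by linarith) (lt_min hα hβ)
  obtain ⟨h, hhS, hh0, hhε⟩ : ∃ h ∈ S, 0 < h ∧ h < ε := by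
    obtain ⟨h, hhS, hmem⟩ := hdense.exists_between (show (0:ℝ) < ε from hε0)
    exact ⟨h, hhS, hmem.1, hmem.2⟩
  -- decompose h
  obtain ⟨ya, hya, yb, hyb, hyab⟩ := AddSubgroup.mem_sup.mp hhS
  obtain ⟨mi, hmval⟩ := AddSubgroup.mem_zmultiples_iff.mp hya
  obtain ⟨ni, hnval⟩ := AddSubgroup.mem_zmultiples_iff.mp hyb
  rw [zsmul_eq_mul] at hmval hnval
  have hdecomp : h = (mi:ℝ) * α + (ni:ℝ) * β := by rw [← hmval, ← hnval] at hyab; linarith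
  have hhα : h < α := lt_of_lt_of_le hhε (le_trans (min_le_right _ _) (min_le_left _ _))
  have hhβ : h < β := lt_of_lt_of_le hhε (le_trans (min_le_right _ _) (min_le_right _ _))
  have hhd : h < d - c := lt_of_lt_of_le hhε (min_le_left _ _)
  -- sign analysis
  rcases lt_trichotomy mi 0 with hm | hm | hm
  · -- mi < 0 : then ni ≥ 1 ; h = ni β - (-mi) α ; descending ladder
    have hn1 : 1 ≤ ni := by
      by_contra hnc
      push_neg at hnc
      have h1 : (mi:ℝ) * α < 0 := by
        have : (mi:ℝ) < 0 := by exact_mod_cast hm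
        nlinarith
      have h2 : (ni:ℝ) * β ≤ 0 := by
        have : (ni:ℝ) ≤ 0 := by exact_mod_cast (by omega : ni ≤ 0)
        nlinarith
      linarith
    have hhform : h = ((ni.toNat:ℕ):ℝ) * β - (((-mi).toNat:ℕ):ℝ) * α := by
      have h1 : ((ni.toNat : ℕ) : ℝ) = (ni:ℝ) := by
        exact_mod_cast congrArg (fun z : ℤ => (z:ℝ)) (Int.toNat_of_nonneg (by omega))
      have h2 : (((-mi).toNat : ℕ) : ℝ) = -(mi:ℝ) := by
        have : ((-mi).toNat : ℤ) = -mi := Int.toNat_of_nonneg (by omega)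
        exact_mod_cast congrArg (fun z : ℤ => (z:ℝ)) this
      rw [h1, h2, hdecomp]; ring
    obtain ⟨k1, k1', hk1, hk1', hlow, hhigh⟩ :=
      ladder_up hβ hα (show -d < -c from by linarith) ni.toNat (-mi).toNat hhform hh0
        (by linarith) K
    refine ⟨k1', k1, hk1, ?_, ?_⟩ <;> linarith
  · -- mi = 0 : h = ni β, but 0 < h < β forces contradiction
    exfalso
    rw [hm] at hdecomp
    simp at hdecomp
    rcases lt_trichotomy ni 0 with hn | hn | hn
    · have h1 : (ni:ℝ) ≤ -1 := by exact_mod_cast (by omega : ni ≤ -1)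
      nlinarith
    · rw [hn] at hdecomp; simp at hdecomp; linarith
    · have h1 : (1:ℝ) ≤ (ni:ℝ) := by exact_mod_cast hn
      nlinarith
  · -- mi ≥ 1 : then ni ≤ -1 ; ascending ladder
    have hn1 : ni ≤ -1 := by
      by_contra hnc
      push_neg at hnc
      have hni0 : 0 ≤ ni := by omega
      have h1 : α ≤ (mi:ℝ) * α := by
        have : (1:ℝ) ≤ (mi:ℝ) := by exact_mod_cast hm
        nlinarith
      have h2 : 0 ≤ (ni:ℝ) * β := by
        have : (0:ℝ) ≤ (ni:ℝ) := by exact_mod_cast hni0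
        nlinarith
      linarith
    have hhform : h = ((mi.toNat:ℕ):ℝ) * α - (((-ni).toNat:ℕ):ℝ) * β := by
      have h1 : ((mi.toNat : ℕ) : ℝ) = (mi:ℝ) := by
        exact_mod_cast congrArg (fun z : ℤ => (z:ℝ)) (Int.toNat_of_nonneg (by omega))
      have h2 : (((-ni).toNat : ℕ) : ℝ) = -(ni:ℝ) := by
        have : ((-ni).toNat : ℤ) = -ni := Int.toNat_of_nonneg (by omega)
        exact_mod_cast congrArg (fun z : ℤ => (z:ℝ)) this
      rw [h1, h2, hdecomp]; ring
    obtain ⟨k1, k1', hk1, hk1', hlow, hhigh⟩ :=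
      ladder_up hα hβ hcd mi.toNat (-ni).toNat hhform hh0 hhd K
    exact ⟨k1, k1', hk1', hlow, hhigh⟩

end CobhamAux


set_option maxHeartbeats 1000000 in
/-- **Words appear with bounded gaps.** Let `p, q ≥ 2` be multiplicatively independent,
`σ` a substitution of constant length `p` with fixed point `y`, `τ` a substitution of
constant length `q` with fixed point `z`, and `φ, ψ` letter-to-letter morphisms with
`φ(y) = ψ(z) = x`. Then every word having infinitely many occurrences in `x`
occurs in `x` with bounded gaps. -/
theorem words_bounded_gaps {A B C : Type*} [Fintype A] [Fintype B] [Fintype C]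
    (p q : ℕ) (hp : 2 ≤ p) (hq : 2 ≤ q) (hind : MultiplicativelyIndependent p q)
    (σ : A → List A) (hσ : IsSubstitution σ) (hσlen : ConstantLength σ p)
    (y : ℕ → A) (hy : IsFixedPoint σ y)
    (τ : B → List B) (hτ : IsSubstitution τ) (hτlen : ConstantLength τ q)
    (z : ℕ → B) (hz : IsFixedPoint τ z)
    (φ : A → C) (ψ : B → C) (x : ℕ → C) (hφ : φ ∘ y = x) (hψ : ψ ∘ z = x) :
    ∀ u : List C, { i : ℕ | OccursAt x u i }.Infinite → BoundedGaps x u := by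
  classical
  intro u hinf
  by_cases hu : u = []
  · exact ⟨1, one_pos, fun i => ⟨i, le_refl i, by omega, by rw [hu]; rfl⟩⟩
  by_contra hbg
  have hφ' : ∀ k, x k = φ (y k) := fun k => (congrFun hφ k).symm
  have hψ' : ∀ k, x k = ψ (z k) := fun k => (congrFun hψ k).symm
  obtain ⟨w₁, w₂, s, m1, r1, o, hm1, hr1, ho, ⟨j0, hj0ge, hj01, hj02⟩, hpump, hocc⟩ :=
    CobhamAux.pside hp hσlen hy hφ' hinf
  obtain ⟨c, κ0, ρ, m2, hm2, hκ0, hzκ, hfree⟩ :=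
    CobhamAux.qside hq hτlen hz hψ' hu hbg
  -- abbreviations
  set P := p ^ m1 with hPdef
  set Qb := q ^ m2 with hQbdef
  have hppow : ∀ n : ℕ, 0 < p ^ n := fun n => Nat.pow_pos (n := n) (by omega)
  have hqpow : ∀ n : ℕ, 0 < q ^ n := fun n => Nat.pow_pos (n := n) (by omega)
  have hP2 : 2 ≤ P := by
    have h1 : p ^ 1 ≤ p ^ m1 := Nat.pow_le_pow_right (by omega) hm1
    rw [pow_one] at h1
    omega
  have hQ2 : 2 ≤ Qb := by
    have h1 : q ^ 1 ≤ q ^ m2 := Nat.pow_le_pow_right (by omega) hm2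
    rw [pow_one] at h1
    omega
  have hmi' : ∀ k l : ℕ, P ^ k = Qb ^ l → k = 0 ∧ l = 0 := by
    intro k l hkl
    rw [hPdef, hQbdef, ← pow_mul, ← pow_mul] at hkl
    obtain ⟨h1, h2⟩ := hind (m1 * k) (m2 * l) hkl
    rcases Nat.mul_eq_zero.mp h1 with h | h
    · omega
    · rcases Nat.mul_eq_zero.mp h2 with h' | h' <;> omega
  obtain ⟨P1, hP1⟩ : ∃ P1, P = P1 + 1 := ⟨P - 1, by omega⟩
  have hP1pos : 1 ≤ P1 := by omega
  -- the pumped sequence of occurrences of the pair (w₁, w₂) in y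
  set J : ℕ → ℕ := fun k => Nat.rec j0 (fun _ prev => P * prev + r1) k with hJdef
  have hJ0 : J 0 = j0 := rfl
  have hJsucc : ∀ k, J (k+1) = P * J k + r1 := fun _ => rfl
  have hJocc : ∀ k, y (J k) = w₁ ∧ y (J k + 1) = w₂ := by
    intro k
    induction k with
    | zero => exact ⟨hj01, hj02⟩
    | succ n ih =>
        rw [hJsucc]
        exact hpump (J n) ih.1 ih.2
  set G := P1 * j0 + r1 with hGdef
  have hG1 : 1 ≤ G := by
    have := Nat.mul_le_mul hP1pos hj0ge
    omega
  have hJform : ∀ k, P1 * J k + r1 = G * P ^ k := by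
    intro k
    induction k with
    | zero => simp [hJ0, hGdef]
    | succ n ih =>
        have h1 : P1 * J (n+1) + r1 = P * (P1 * J n + r1) := by
          rw [hJsucc, hP1]; ring
        rw [h1, ih, pow_succ]; ring
  -- Kronecker step
  set D := G * p ^ s with hDdef
  have hDpos : 0 < D := Nat.mul_pos (by omega) (hppow s)
  set X := (3*κ0+1) * (P1 * q ^ ρ) with hXdef
  set Y := (3*κ0+2) * (P1 * q ^ ρ) with hYdef
  have hXpos : 0 < X := Nat.mul_pos (by omega) (Nat.mul_pos (by omega) (hqpow ρ))
  have hXY : X < Y := by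
    exact (Nat.mul_lt_mul_right (Nat.mul_pos (by omega : 0 < P1) (hqpow ρ))).mpr (by omega)
  have h3D : (0:ℝ) < 3 * (D:ℝ) := by
    have : (0:ℝ) < (D:ℝ) := by exact_mod_cast hDpos
    linarith
  set K' := 3*(p^s*r1) + 6*p^s + 1 with hK'def
  obtain ⟨k, k', hk'K, hlo, hhi⟩ := CobhamAux.kronecker hP2 hQ2 hmi'
    (a := (X:ℝ) / (3*(D:ℝ))) (b := (Y:ℝ) / (3*(D:ℝ)))
    (div_pos (by exact_mod_cast hXpos) h3D)
    (by
      rw [div_lt_div_iff_of_pos_right h3D]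
      exact_mod_cast hXY) K'
  -- convert the Kronecker inequalities to ℕ
  rw [div_mul_eq_mul_div, div_lt_iff₀ h3D] at hlo
  rw [div_mul_eq_mul_div, lt_div_iff₀ h3D] at hhi
  have hLn : X * Qb ^ k' < P ^ k * (3*D) := by exact_mod_cast hlo
  have hHn : P ^ k * (3*D) < Y * Qb ^ k' := by exact_mod_cast hhi
  -- names for the quantities involved
  set Qk := q ^ ρ * Qb ^ k' with hQkdef
  set E2 := P1 * Qk with hE2def
  set E1 := κ0 * E2 with hE1def
  have idL : X * Qb ^ k' = 3*E1 + E2 := by rw [hXdef, hE1def, hE2def, hQkdef]; ring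
  have idR : Y * Qb ^ k' = 3*E1 + 2*E2 := by rw [hYdef, hE1def, hE2def, hQkdef]; ring
  have id3 : P ^ k * (3*D) = 3*(D * P ^ k) := by ring
  have hDP : D * P ^ k = p^s * (P1 * J k) + p^s * r1 := by
    calc D * P ^ k = p^s * (G * P ^ k) := by rw [hDdef]; ring
    _ = p^s * (P1 * J k + r1) := by rw [← hJform k]
    _ = p^s * (P1 * J k) + p^s * r1 := by ring
  -- size of Qk
  have hQkK : K' ≤ Qk := by
    have h1 : 2 ^ K' ≤ 2 ^ k' := Nat.pow_le_pow_right (by omega) hk'K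
    have h2 : 2 ^ k' ≤ Qb ^ k' := Nat.pow_le_pow_left hQ2 k'
    have h3 : Qb ^ k' ≤ Qk := by
      rw [hQkdef]
      calc Qb ^ k' = 1 * Qb ^ k' := (one_mul _).symm
      _ ≤ q ^ ρ * Qb ^ k' := Nat.mul_le_mul_right _ (hqpow ρ)
    have h4 : K' < 2 ^ K' := Nat.lt_two_pow_self (n := K')
    omega
  have hE2Q : Qk ≤ E2 := by
    rw [hE2def]
    calc Qk = 1 * Qk := (one_mul _).symm
    _ ≤ P1 * Qk := Nat.mul_le_mul_right _ hP1pos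
  -- key inequality (i) : κ0 * Qk ≤ p^s * J k
  have key1 : κ0 * Qk ≤ p^s * J k := by
    have h1 : 3*E1 + E2 < 3*(D * P ^ k) := by rw [← idL, ← id3]; exact hLn
    have h2 : 3*(p^s*r1) ≤ E2 := by omega
    have h3 : E1 + p^s*r1 < D * P ^ k := by omega
    have h4 : E1 ≤ p^s * (P1 * J k) := by omega
    have id4 : E1 = P1 * (κ0 * Qk) := by rw [hE1def, hE2def]; ring
    have id5 : p^s * (P1 * J k) = P1 * (p^s * J k) := by ring
    refine Nat.le_of_mul_le_mul_left ?_ (show 0 < P1 from by omega)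
    rw [← id4, ← id5]
    exact h4
  -- key inequality (ii) : p^s * J k + p^s * 2 ≤ (κ0+1) * Qk
  have key2 : p^s * J k + p^s * 2 ≤ (κ0 + 1) * Qk := by
    have h1 : 3*(D * P ^ k) < 3*E1 + 2*E2 := by rw [← idR, ← id3]; exact hHn
    have h2 : 6*p^s ≤ Qk := by omega
    have h3 : P1 * (6*p^s) ≤ E2 := by
      rw [hE2def]
      exact Nat.mul_le_mul_left _ h2
    have id5 : p^s * (P1 * J k) = P1 * (p^s * J k) := by ring
    have id6 : P1 * ((κ0+1) * Qk) = E1 + E2 := by rw [hE1def, hE2def]; ring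
    have id7 : 3 * (P1 * (p^s * 2)) = P1 * (6*p^s) := by ring
    have hDP' : P1 * (p^s * J k) + p^s * r1 = D * P ^ k := by rw [← id5, hDP]
    have h5 : P1 * (p^s * J k) + P1 * (p^s * 2) ≤ P1 * ((κ0+1) * Qk) := by omega
    refine Nat.le_of_mul_le_mul_left ?_ (show 0 < P1 from by omega)
    calc P1 * (p^s * J k + p^s * 2) = P1 * (p^s * J k) + P1 * (p^s * 2) := by ring
    _ ≤ P1 * ((κ0+1) * Qk) := h5
  -- the occurrence of u
  set π := p ^ s * J k + o with hπdef
  have hoccπ : OccursAt x u π := hocc (J k) (hJocc k).1 (hJocc k).2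
  -- the u-free block
  set t := ρ + k' * m2 with htdef
  have hqt : q ^ t = Qk := by
    rw [htdef, pow_add, mul_comm k' m2, pow_mul, hQkdef, hQbdef]
  have hxblockq : factorAt x (q^t * κ0) (q^t) = (wordIter τ t [c]).map ψ := by
    have hxeq : x = fun n => ψ (z n) := funext hψ'
    rw [hxeq, CobhamAux.factorAt_map, CobhamAux.block1 hτlen hz t κ0, hzκ]
  apply hfree k'
  refine CobhamAux.infix_of_occursAt hxblockq hoccπ ?_ ?_
  · rw [hqt]
    calc Qk * κ0 = κ0 * Qk := mul_comm ..
    _ ≤ p^s * J k := key1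
    _ ≤ π := by omega
  · rw [hqt]
    have h1 : π + u.length ≤ p^s * J k + p^s * 2 := by
      have := ho
      omega
    have h2 : (κ0 + 1) * Qk = Qk * κ0 + Qk := by ring
    omega
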